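/- The set H* := sbh(D) \ {-∞} of subharmonic functions on a domain D not identically -∞ is closed under the following operation: if (h_k) ⊂ H* is locally uniformly bounded above and below (bounded in L¹_loc order), then the upper semicontinuous regularization of limsup_k h_k belongs to H*. -/

import Mathlib

open MeasureTheory Filter Metric
open scoped ENNReal NNReal Topology

/-- The positive part of an extended real, as an extended nonnegative real. -/
noncomputable def EReal.posPart (x : EReal) : ℝ≥0∞ :=
  if x = ⊤ then ⊤ else ENNReal.ofReal x.toReal

/-- The integral of an `EReal`-valued function against a measure, with values in `EReal`
(defined as the integral of the positive part minus the integral of the negative part). -/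
noncomputable def eInt {α : Type*} [MeasurableSpace α] (μ : Measure α) (f : α → EReal) : EReal :=
  ((∫⁻ x, (f x).posPart ∂μ : ℝ≥0∞) : EReal) - ((∫⁻ x, (-(f x)).posPart ∂μ : ℝ≥0∞) : EReal)

/-- A function `u : X → EReal` is subharmonic on `D` if it is upper semicontinuous on `D`
and satisfies the sub-mean-value inequality on closed balls contained in `D`. -/
def SubharmonicOn {X : Type*} [NormedAddCommGroup X] [MeasureSpace X]
    (u : X → EReal) (D : Set X) : Prop :=
  UpperSemicontinuousOn u D ∧
  ∀ x ∈ D, ∀ r : ℝ, 0 < r → closedBall x r ⊆ D →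
    u x * ((volume (closedBall x r)).toReal : EReal) ≤ eInt (volume.restrict (closedBall x r)) u

/-! ### Auxiliary lemmas on `EReal.posPart` -/

namespace EReal

@[simp] lemma posPart_top' : (⊤ : EReal).posPart = ⊤ := rfl
@[simp] lemma posPart_bot' : (⊥ : EReal).posPart = 0 := by simp [EReal.posPart]
@[simp] lemma posPart_coe' (r : ℝ) : (r : EReal).posPart = ENNReal.ofReal r := by
  simp [EReal.posPart]

lemma posPart_mono' : Monotone EReal.posPart := by
  intro a b hab
  rcases eq_or_ne b ⊤ with rfl | hb
  · simp
  rcases eq_or_ne a ⊥ with rfl | ha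
  · simp
  have ha' : a ≠ ⊤ := fun h => hb (top_le_iff.1 (h ▸ hab))
  simp only [EReal.posPart, if_neg hb, if_neg ha']
  exact ENNReal.ofReal_le_ofReal (EReal.toReal_le_toReal hab ha hb)

lemma posPart_surjective' : Function.Surjective EReal.posPart := by
  intro y
  rcases eq_or_ne y ⊤ with rfl | hy
  · exact ⟨⊤, rfl⟩
  · refine ⟨(y.toReal : ℝ), ?_⟩
    simp [ENNReal.ofReal_toReal hy]

lemma posPart_continuous' : Continuous EReal.posPart :=
  posPart_mono'.continuous_of_surjective posPart_surjective'

lemma posPart_measurable' : Measurable EReal.posPart := posPart_continuous'.measurable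

lemma posPart_limsup' (a : ℕ → EReal) :
    (limsup a atTop).posPart = limsup (fun k => (a k).posPart) atTop :=
  posPart_mono'.map_limsup_of_continuousAt a posPart_continuous'.continuousAt

lemma posPart_liminf' (a : ℕ → EReal) :
    (liminf a atTop).posPart = liminf (fun k => (a k).posPart) atTop :=
  posPart_mono'.map_liminf_of_continuousAt a posPart_continuous'.continuousAt

lemma coe_ennreal_mono' : Monotone ((↑) : ℝ≥0∞ → EReal) :=
  fun _ _ h => EReal.coe_ennreal_le_coe_ennreal_iff.2 h

lemma coe_ennreal_limsup' (a : ℕ → ℝ≥0∞) :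
    ((limsup a atTop : ℝ≥0∞) : EReal) = limsup (fun k => ((a k : ℝ≥0∞) : EReal)) atTop :=
  coe_ennreal_mono'.map_limsup_of_continuousAt a continuous_coe_ennreal_ereal.continuousAt

lemma coe_ennreal_liminf' (a : ℕ → ℝ≥0∞) :
    ((liminf a atTop : ℝ≥0∞) : EReal) = liminf (fun k => ((a k : ℝ≥0∞) : EReal)) atTop :=
  coe_ennreal_mono'.map_liminf_of_continuousAt a continuous_coe_ennreal_ereal.continuousAt

/-! ### Multiplication by a positive real constant -/

lemma mul_coe_le_mul_coe {a b : EReal} {c : ℝ} (hab : a ≤ b) (hc : 0 ≤ c) :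
    a * (c : EReal) ≤ b * (c : EReal) := by
  rw [EReal.mul_comm, EReal.mul_comm b]
  exact mul_le_mul_of_nonneg_left hab (by exact_mod_cast hc)

lemma mul_coe_cancel' {c : ℝ} (hc : 0 < c) (x : EReal) :
    x * (c : EReal) * ((c⁻¹ : ℝ) : EReal) = x := by
  induction x with
  | bot =>
      rw [EReal.bot_mul_coe_of_pos hc, EReal.bot_mul_coe_of_pos (inv_pos.2 hc)]
  | coe x =>
      rw [← EReal.coe_mul, ← EReal.coe_mul]
      norm_cast
      field_simp
  | top =>
      rw [EReal.top_mul_coe_of_pos hc, EReal.top_mul_coe_of_pos (inv_pos.2 hc)]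

/-- Multiplication by a positive real constant as an order isomorphism of `EReal`. -/
noncomputable def mulRightIso' (c : ℝ) (hc : 0 < c) : EReal ≃o EReal :=
  Equiv.toOrderIso
    { toFun := fun x => x * (c : EReal)
      invFun := fun x => x * ((c⁻¹ : ℝ) : EReal)
      left_inv := fun x => mul_coe_cancel' hc x
      right_inv := fun x => by
        show x * ((c⁻¹ : ℝ) : EReal) * (c : EReal) = x
        have := mul_coe_cancel' (inv_pos.2 hc) x
        rw [_root_.inv_inv c] at this; exact this }
    (fun _ _ h => mul_coe_le_mul_coe h hc.le)
    (fun _ _ h => mul_coe_le_mul_coe h (inv_pos.2 hc).le)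

lemma limsup_mul_coe' (a : ℕ → EReal) {c : ℝ} (hc : 0 < c) :
    limsup (fun k => a k * (c : EReal)) atTop = (limsup a atTop) * (c : EReal) :=
  ((mulRightIso' c hc).limsup_apply).symm

lemma mul_coe_le_of_forall_real_lt {a b : EReal} {c : ℝ} (hc : 0 < c)
    (h : ∀ t : ℝ, (t : EReal) < a → (t : EReal) * (c : EReal) ≤ b) : a * (c : EReal) ≤ b := by
  have hc' : (0 : EReal) < (c : EReal) := by exact_mod_cast hc
  have hct : (c : EReal) ≠ ⊤ := EReal.coe_ne_top c
  rw [← EReal.le_div_iff_mul_le hc' hct]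
  by_contra hab
  push_neg at hab
  obtain ⟨t, h1, h2⟩ := EReal.exists_between_coe_real hab
  have := (EReal.le_div_iff_mul_le hc' hct).2 (h t h2)
  exact absurd (lt_of_lt_of_le h1 this) (lt_irrefl _)

end EReal

/-! ### Auxiliary lemmas on `eInt` -/

lemma eInt_mono' {α : Type*} [MeasurableSpace α] (μ : Measure α) {f g : α → EReal}
    (h : ∀ᵐ x ∂μ, f x ≤ g x) : eInt μ f ≤ eInt μ g := by
  refine EReal.sub_le_sub ?_ ?_
  · exact EReal.coe_ennreal_le_coe_ennreal_iff.2 <|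
      lintegral_mono_ae (h.mono fun x hx => EReal.posPart_mono' hx)
  · exact EReal.coe_ennreal_le_coe_ennreal_iff.2 <|
      lintegral_mono_ae (h.mono fun x hx => EReal.posPart_mono' (EReal.neg_le_neg_iff.2 hx))

/-- When both parts are finite, `eInt` is the coercion of a real number. -/
lemma eInt_eq_coe' {α : Type*} [MeasurableSpace α] (μ : Measure α) (f : α → EReal)
    {P N : ℝ≥0∞} (hP : (∫⁻ x, (f x).posPart ∂μ) = P) (hN : (∫⁻ x, (-(f x)).posPart ∂μ) = N)
    (hP' : P ≠ ⊤) (hN' : N ≠ ⊤) :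
    eInt μ f = ((P.toReal - N.toReal : ℝ) : EReal) := by
  rw [eInt, hP, hN]
  lift P to ℝ≥0 using hP'
  lift N to ℝ≥0 using hN'
  rw [EReal.coe_sub]
  norm_cast

/-! ### Measurability of upper semicontinuous functions -/

open scoped Classical in
/-- An upper semicontinuous function on an open set, extended by `⊥`, is measurable. -/
lemma measurable_of_uscOn' {X : Type*} [TopologicalSpace X] [MeasurableSpace X] [BorelSpace X]
    {u : X → EReal} {D : Set X} (hD : IsOpen D) (hu : UpperSemicontinuousOn u D) :
    Measurable (fun x => if x ∈ D then u x else (⊥ : EReal)) := by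
  apply measurable_of_Iio
  intro c
  rcases eq_or_ne c ⊥ with rfl | hc
  · convert MeasurableSet.empty
    ext x
    simp only [Set.mem_preimage, Set.mem_Iio, Set.mem_empty_iff_false, iff_false]
    exact fun h => (not_lt_bot (lt_of_le_of_lt bot_le h) : False)
  · have hopen : IsOpen {x | x ∈ D ∧ u x < c} := by
      rw [isOpen_iff_mem_nhds]
      rintro x ⟨hxD, hxc⟩
      have h1 : ∀ᶠ y in 𝓝[D] x, u y < c := hu x hxD c hxc
      rw [hD.nhdsWithin_eq hxD] at h1
      filter_upwards [h1, hD.mem_nhds hxD] with y h1y h2y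
      exact ⟨h2y, h1y⟩
    have : (fun x => if x ∈ D then u x else (⊥ : EReal)) ⁻¹' Set.Iio c
        = {x | x ∈ D ∧ u x < c} ∪ Dᶜ := by
      ext x
      by_cases hx : x ∈ D <;>
        simp [hx, bot_lt_iff_ne_bot.2 (Ne.symm (Ne.symm hc))]
    rw [this]
    exact (hopen.measurableSet).union (hD.measurableSet.compl)

/-! ### Upper regularization -/

lemma limsup_pure' {α : Type*} (F : α → EReal) (x : α) : limsup F (pure x) = F x := by
  apply le_antisymm
  · exact limsup_le_of_le (by isBoundedDefault) (eventually_pure.2 le_rfl)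
  · exact le_limsup_of_frequently_le ((eventually_pure.2 le_rfl).frequently) (by isBoundedDefault)

/-- The upper regularization of any function is upper semicontinuous. -/
lemma usc_of_limsup_nhds' {X : Type*} [TopologicalSpace X] (F : X → EReal) :
    UpperSemicontinuous (fun x => limsup F (𝓝 x)) := by
  intro x c hc
  obtain ⟨c', hc1, hc2⟩ := exists_between hc
  have h1 : ∀ᶠ y in 𝓝 x, F y < c' := eventually_lt_of_limsup_lt hc1
  obtain ⟨U, hU, hUo, hUx⟩ := eventually_nhds_iff.1 h1
  filter_upwards [hUo.mem_nhds hUx] with y hy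
  calc limsup F (𝓝 y) ≤ c' :=
        limsup_le_of_le (by isBoundedDefault)
          (eventually_of_mem (hUo.mem_nhds hy) (fun z hz => (hU z hz).le))
    _ < c := hc2

lemma reg_eq_limsup_nhds' {X : Type*} [TopologicalSpace X] (F : X → EReal) (x : X) :
    F x ⊔ limsup F (𝓝[≠] x) = limsup F (𝓝 x) := by
  conv_rhs => rw [← nhdsNE_sup_pure x]
  rw [limsup_sup_filter, limsup_pure', sup_comm]

/-- The set `H* = sbh(D) \ {-∞}` is closed under upper-regularized `limsup`s of sequences
bounded above and below by locally integrable functions (bounded in the `L¹_loc` order):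
the regularization is again subharmonic and not identically `-∞`. -/
theorem reg_limsup_mem_sbh_star {d : ℕ}
    (D : Set (EuclideanSpace ℝ (Fin d))) (hDo : IsOpen D) (hDc : IsConnected D)
    (h : ℕ → EuclideanSpace ℝ (Fin d) → EReal)
    (hsbh : ∀ k, SubharmonicOn (h k) D)
    (hne : ∀ k, ∃ x ∈ D, h k x ≠ ⊥)
    (hbdd : ∃ g G : EuclideanSpace ℝ (Fin d) → ℝ,
      LocallyIntegrableOn g D volume ∧ LocallyIntegrableOn G D volume ∧
      ∀ k, ∀ᵐ x ∂(volume.restrict D), (g x : EReal) ≤ h k x ∧ h k x ≤ (G x : EReal)) :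
    SubharmonicOn (fun x => Filter.limsup (fun k => h k x) atTop ⊔
        Filter.limsup (fun y => Filter.limsup (fun k => h k y) atTop) (𝓝[≠] x)) D ∧
    ∃ x ∈ D, (Filter.limsup (fun k => h k x) atTop ⊔
        Filter.limsup (fun y => Filter.limsup (fun k => h k y) atTop) (𝓝[≠] x)) ≠ ⊥ := by
  classical
  obtain ⟨g, G, hgi, hGi, hbd⟩ := hbdd
  set F : EuclideanSpace ℝ (Fin d) → EReal := fun z => limsup (fun k => h k z) atTop with hF
  set Freg : EuclideanSpace ℝ (Fin d) → EReal := fun x => F x ⊔ limsup F (𝓝[≠] x) with hFreg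
  have hDmeas : MeasurableSet D := hDo.measurableSet
  -- measurable modifications of the `h k`
  set v : ℕ → EuclideanSpace ℝ (Fin d) → EReal := fun k z => if z ∈ D then h k z else ⊥ with hv
  have hvmeas : ∀ k, Measurable (v k) := fun k => measurable_of_uscOn' hDo (hsbh k).1
  -- the a.e. bounds on `D`, all `k` at once
  have haeD : ∀ᵐ z ∂(volume.restrict D), ∀ k, (g z : EReal) ≤ h k z ∧ h k z ≤ (G z : EReal) :=
    ae_all_iff.2 hbd
  -- `F` is squeezed between `g` and `G` a.e. on `D`
  have haeF : ∀ᵐ z ∂(volume.restrict D), (g z : EReal) ≤ F z ∧ F z ≤ (G z : EReal) := by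
    filter_upwards [haeD] with z hz
    constructor
    · exact le_limsup_of_frequently_le
        ((Eventually.of_forall (fun k => (hz k).1)).frequently) (by isBoundedDefault)
    · exact limsup_le_of_le (by isBoundedDefault) (Eventually.of_forall (fun k => (hz k).2))
  -- Key step A : the sub-mean-value inequality for `F` at any center.
  have keyA : ∀ y ∈ D, ∀ ρ : ℝ, 0 < ρ → closedBall y ρ ⊆ D →
      F y * ((volume (closedBall y ρ)).toReal : EReal)
        ≤ eInt (volume.restrict (closedBall y ρ)) F := by
    intro y hy ρ hρ hsub
    set B := closedBall y ρ with hB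
    set μ := volume.restrict B with hμ
    have hBmeas : MeasurableSet B := measurableSet_closedBall
    have hae : ∀ᵐ z ∂μ, ∀ k, (g z : EReal) ≤ h k z ∧ h k z ≤ (G z : EReal) :=
      ae_restrict_of_ae_restrict_of_subset hsub haeD
    have haeFB : ∀ᵐ z ∂μ, (g z : EReal) ≤ F z ∧ F z ≤ (G z : EReal) :=
      ae_restrict_of_ae_restrict_of_subset hsub haeF
    have hveq : ∀ k, ∀ z ∈ B, v k z = h k z := fun k z hz => if_pos (hsub hz)
    have haev : ∀ k, v k =ᵐ[μ] h k := fun k =>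
      (ae_restrict_iff' hBmeas).2 (Eventually.of_forall (fun z hz => hveq k z hz))
    -- integrability of the bounds on `B`
    have hGB : IntegrableOn G B volume :=
      hGi.integrableOn_compact_subset hsub (isCompact_closedBall y ρ)
    have hgB : IntegrableOn g B volume :=
      hgi.integrableOn_compact_subset hsub (isCompact_closedBall y ρ)
    set CG := ∫⁻ z, (‖G z‖₊ : ℝ≥0∞) ∂μ with hCGdef
    set Cg := ∫⁻ z, (‖g z‖₊ : ℝ≥0∞) ∂μ with hCgdef
    have hCG : CG ≠ ⊤ := hGB.2.ne
    have hCg : Cg ≠ ⊤ := hgB.2.ne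
    -- the positive and negative parts
    set Pk : ℕ → ℝ≥0∞ := fun k => ∫⁻ z, (h k z).posPart ∂μ with hPk
    set Nk : ℕ → ℝ≥0∞ := fun k => ∫⁻ z, (-(h k z)).posPart ∂μ with hNk
    set PF := ∫⁻ z, (F z).posPart ∂μ with hPF
    set NF := ∫⁻ z, (-(F z)).posPart ∂μ with hNF
    -- bounds
    have hPk_le : ∀ k, Pk k ≤ CG := by
      intro k
      refine lintegral_mono_ae ?_
      filter_upwards [hae] with z hz
      calc (h k z).posPart ≤ ((G z : EReal)).posPart := EReal.posPart_mono' (hz k).2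
        _ = ENNReal.ofReal (G z) := EReal.posPart_coe' _
        _ ≤ (‖G z‖₊ : ℝ≥0∞) := Real.ofReal_le_enorm _
    have hNk_le : ∀ k, Nk k ≤ Cg := by
      intro k
      refine lintegral_mono_ae ?_
      filter_upwards [hae] with z hz
      calc (-(h k z)).posPart ≤ ((-(g z) : ℝ) : EReal).posPart := by
            refine EReal.posPart_mono' ?_
            rw [EReal.coe_neg]
            exact EReal.neg_le_neg_iff.2 (hz k).1
        _ = ENNReal.ofReal (-(g z)) := EReal.posPart_coe' _
        _ ≤ (‖(-(g z))‖₊ : ℝ≥0∞) := Real.ofReal_le_enorm _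
        _ = (‖g z‖₊ : ℝ≥0∞) := by rw [nnnorm_neg]
    have hPF_le : PF ≤ CG := by
      refine lintegral_mono_ae ?_
      filter_upwards [haeFB] with z hz
      calc (F z).posPart ≤ ((G z : EReal)).posPart := EReal.posPart_mono' hz.2
        _ = ENNReal.ofReal (G z) := EReal.posPart_coe' _
        _ ≤ (‖G z‖₊ : ℝ≥0∞) := Real.ofReal_le_enorm _
    have hNF_le : NF ≤ Cg := by
      refine lintegral_mono_ae ?_
      filter_upwards [haeFB] with z hz
      calc (-(F z)).posPart ≤ ((-(g z) : ℝ) : EReal).posPart := by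
            refine EReal.posPart_mono' ?_
            rw [EReal.coe_neg]
            exact EReal.neg_le_neg_iff.2 hz.1
        _ = ENNReal.ofReal (-(g z)) := EReal.posPart_coe' _
        _ ≤ (‖(-(g z))‖₊ : ℝ≥0∞) := Real.ofReal_le_enorm _
        _ = (‖g z‖₊ : ℝ≥0∞) := by rw [nnnorm_neg]
    -- reverse Fatou for the positive parts
    have hPlimsup : limsup Pk atTop ≤ PF := by
      have h1 : ∀ k, Pk k = ∫⁻ z, (v k z).posPart ∂μ := by
        intro k
        refine lintegral_congr_ae ?_
        filter_upwards [haev k] with z hz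
        rw [hz]
      calc limsup Pk atTop = limsup (fun k => ∫⁻ z, (v k z).posPart ∂μ) atTop :=
            congrArg (fun u => limsup u atTop) (funext h1)
        _ ≤ ∫⁻ z, limsup (fun k => (v k z).posPart) atTop ∂μ := by
            refine limsup_lintegral_le (fun z => (‖G z‖₊ : ℝ≥0∞))
              (fun k => EReal.posPart_measurable'.comp (hvmeas k)) (fun k => ?_) hCG
            filter_upwards [hae, (ae_restrict_iff' hBmeas).2
              (Eventually.of_forall (fun z hz => hveq k z hz))] with z hz hz2
            rw [hz2]
            calc (h k z).posPart ≤ ((G z : EReal)).posPart := EReal.posPart_mono' (hz k).2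
              _ = ENNReal.ofReal (G z) := EReal.posPart_coe' _
              _ ≤ (‖G z‖₊ : ℝ≥0∞) := Real.ofReal_le_enorm _
        _ = ∫⁻ z, (F z).posPart ∂μ := by
            refine lintegral_congr_ae ?_
            filter_upwards [(ae_restrict_iff' hBmeas).2
              (Eventually.of_forall (fun (z : EuclideanSpace ℝ (Fin d)) (hz : z ∈ B) => funext (fun k => hveq k z hz)
                : ∀ z ∈ B, (fun k => v k z) = fun k => h k z))] with z hz
            rw [← EReal.posPart_limsup', hF]
            simp only [hz]
    -- Fatou for the negative parts
    have hNliminf : NF ≤ liminf Nk atTop := by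
      have h1 : ∀ k, Nk k = ∫⁻ z, (-(v k z)).posPart ∂μ := by
        intro k
        refine lintegral_congr_ae ?_
        filter_upwards [haev k] with z hz
        rw [hz]
      calc NF = ∫⁻ z, liminf (fun k => (-(v k z)).posPart) atTop ∂μ := by
            refine lintegral_congr_ae ?_
            filter_upwards [(ae_restrict_iff' hBmeas).2
              (Eventually.of_forall (fun (z : EuclideanSpace ℝ (Fin d)) (hz : z ∈ B) => funext (fun k => hveq k z hz)
                : ∀ z ∈ B, (fun k => v k z) = fun k => h k z))] with z hz
            rw [← EReal.posPart_liminf']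
            congr 1
            have : liminf (fun k => -(v k z)) atTop = - limsup (fun k => v k z) atTop := by
              have := EReal.liminf_neg (v := fun k => v k z) (f := atTop)
              exact this
            rw [this, hz]
        _ ≤ liminf (fun k => ∫⁻ z, (-(v k z)).posPart ∂μ) atTop := by
            refine lintegral_liminf_le (fun k => ?_)
            exact EReal.posPart_measurable'.comp (measurable_neg.comp (hvmeas k))
        _ = liminf Nk atTop :=
            (congrArg (fun u => liminf u atTop) (funext h1)).symm
    -- the sub-mean-value property of each `h k`, rewritten
    have hsub1 : ∀ k, h k y * ((volume B).toReal : EReal)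
        ≤ ((Pk k : ℝ≥0∞) : EReal) - ((Nk k : ℝ≥0∞) : EReal) := fun k =>
      (hsbh k).2 y hy ρ hρ hsub
    have hVpos : (0 : ℝ) < (volume B).toReal :=
      ENNReal.toReal_pos (measure_closedBall_pos volume y hρ).ne' measure_closedBall_lt_top.ne
    -- pass to the limsup
    calc F y * ((volume B).toReal : EReal)
        = limsup (fun k => h k y * ((volume B).toReal : EReal)) atTop :=
          (EReal.limsup_mul_coe' _ hVpos).symm
      _ ≤ limsup (fun k => ((Pk k : ℝ≥0∞) : EReal) - ((Nk k : ℝ≥0∞) : EReal)) atTop :=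
          limsup_le_limsup (Eventually.of_forall hsub1) (by isBoundedDefault)
            (by isBoundedDefault)
      _ ≤ limsup (fun k => ((Pk k : ℝ≥0∞) : EReal)) atTop
            + limsup (fun k => -((Nk k : ℝ≥0∞) : EReal)) atTop := by
          have heq : (fun k => ((Pk k : ℝ≥0∞) : EReal) - ((Nk k : ℝ≥0∞) : EReal))
              = (fun k => ((Pk k : ℝ≥0∞) : EReal)) + (fun k => -((Nk k : ℝ≥0∞) : EReal)) := by
            funext k
            exact sub_eq_add_neg _ _
          rw [heq]
          refine EReal.limsup_add_le ?_ ?_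
          · refine Or.inr (fun hTop => ?_)
            have : limsup (fun k => -((Nk k : ℝ≥0∞) : EReal)) atTop ≤ 0 := by
              refine limsup_le_of_le (by isBoundedDefault)
                (Eventually.of_forall (fun k => ?_))
              rw [← neg_zero]
              exact EReal.neg_le_neg_iff.2 (EReal.coe_ennreal_nonneg _)
            rw [hTop] at this
            exact absurd this (by simp)
          · refine Or.inl (fun hTop => ?_)
            have : limsup (fun k => ((Pk k : ℝ≥0∞) : EReal)) atTop ≤ ((CG : ℝ≥0∞) : EReal) := by
              refine limsup_le_of_le (by isBoundedDefault)
                (Eventually.of_forall (fun k =>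
                  EReal.coe_ennreal_le_coe_ennreal_iff.2 (hPk_le k)))
            rw [hTop, top_le_iff, EReal.coe_ennreal_eq_top_iff] at this
            exact hCG this
      _ = ((limsup Pk atTop : ℝ≥0∞) : EReal) - ((liminf Nk atTop : ℝ≥0∞) : EReal) := by
          rw [EReal.coe_ennreal_limsup', sub_eq_add_neg]
          congr 1
          have h2 : (fun k => -((Nk k : ℝ≥0∞) : EReal)) = -(fun k => ((Nk k : ℝ≥0∞) : EReal)) := by
            funext k; rfl
          rw [h2, EReal.limsup_neg, EReal.coe_ennreal_liminf']
      _ ≤ ((PF : ℝ≥0∞) : EReal) - ((NF : ℝ≥0∞) : EReal) :=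
          EReal.sub_le_sub (EReal.coe_ennreal_le_coe_ennreal_iff.2 hPlimsup)
            (EReal.coe_ennreal_le_coe_ennreal_iff.2 hNliminf)
      _ = eInt μ F := rfl
  -- upper semicontinuity of the regularization
  have hFreg_eq : Freg = fun x => limsup F (𝓝 x) := funext (fun x => reg_eq_limsup_nhds' F x)
  have husc : UpperSemicontinuousOn Freg D := by
    rw [hFreg_eq]
    exact (usc_of_limsup_nhds' F).upperSemicontinuousOn D
  refine ⟨⟨husc, ?_⟩, ?_⟩
  · -- the sub-mean-value inequality for the regularization
    intro x hx r hr hsubB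
    set B := closedBall x r with hBdef
    set μ := volume.restrict B with hμdef
    have hBmeas : MeasurableSet B := measurableSet_closedBall
    set V := (volume B).toReal with hVdef
    have hVpos : (0 : ℝ) < V :=
      ENNReal.toReal_pos (measure_closedBall_pos volume x hr).ne' measure_closedBall_lt_top.ne
    have haeFB : ∀ᵐ z ∂μ, (g z : EReal) ≤ F z ∧ F z ≤ (G z : EReal) :=
      ae_restrict_of_ae_restrict_of_subset hsubB haeF
    -- bounds on the parts over B
    have hgB : IntegrableOn g B volume :=
      hgi.integrableOn_compact_subset hsubB (isCompact_closedBall x r)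
    have hGB : IntegrableOn G B volume :=
      hGi.integrableOn_compact_subset hsubB (isCompact_closedBall x r)
    set PF := ∫⁻ z, (F z).posPart ∂μ with hPFdef
    set NF := ∫⁻ z, (-(F z)).posPart ∂μ with hNFdef
    have hPF : PF ≠ ⊤ := by
      refine ne_top_of_le_ne_top hGB.2.ne (lintegral_mono_ae ?_)
      filter_upwards [haeFB] with z hz
      calc (F z).posPart ≤ ((G z : EReal)).posPart := EReal.posPart_mono' hz.2
        _ = ENNReal.ofReal (G z) := EReal.posPart_coe' _
        _ ≤ (‖G z‖₊ : ℝ≥0∞) := Real.ofReal_le_enorm _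
    have hNF : NF ≠ ⊤ := by
      refine ne_top_of_le_ne_top hgB.2.ne (lintegral_mono_ae ?_)
      filter_upwards [haeFB] with z hz
      calc (-(F z)).posPart ≤ ((-(g z) : ℝ) : EReal).posPart := by
            refine EReal.posPart_mono' ?_
            rw [EReal.coe_neg]
            exact EReal.neg_le_neg_iff.2 hz.1
        _ = ENNReal.ofReal (-(g z)) := EReal.posPart_coe' _
        _ ≤ (‖(-(g z))‖₊ : ℝ≥0∞) := Real.ofReal_le_enorm _
        _ = (‖g z‖₊ : ℝ≥0∞) := by rw [nnnorm_neg]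
    have heIntF : eInt μ F = ((PF.toReal - NF.toReal : ℝ) : EReal) :=
      eInt_eq_coe' μ F rfl rfl hPF hNF
    -- `F ≤ Freg` pointwise, hence `eInt μ F ≤ eInt μ Freg`
    have heIntle : eInt μ F ≤ eInt μ Freg :=
      eInt_mono' μ (Eventually.of_forall (fun z => le_sup_left))
    -- center part
    have hcenter : F x * (V : EReal) ≤ eInt μ F := keyA x hx r hr hsubB
    -- the limsup part
    have hlimsup_part : limsup F (𝓝[≠] x) * (V : EReal) ≤ eInt μ F := by
      refine EReal.mul_coe_le_of_forall_real_lt hVpos (fun t ht => ?_)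
      -- points approximating the limsup
      have hfreq : ∃ᶠ z in 𝓝[≠] x, (t : EReal) < F z :=
        frequently_lt_of_lt_limsup (by isBoundedDefault) ht
      set δ : ℕ → ℝ := fun n => r / (2 * (n + 2)) with hδdef
      have hδpos : ∀ n, 0 < δ n := fun n => by positivity
      have hδval : ∀ n, 2 * δ n = r / ((n : ℝ) + 2) := by
        intro n
        rw [hδdef]
        field_simp
      have hδle : ∀ n, 2 * δ n ≤ r / 2 := by
        intro n
        rw [hδval n]
        have h2 : (2 : ℝ) ≤ (n : ℝ) + 2 := by
          have := Nat.cast_nonneg (α := ℝ) n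
          linarith
        exact div_le_div_of_nonneg_left hr.le (by norm_num) h2
      have hδanti : Antitone δ := by
        intro m n hmn
        have hmn' : (m : ℝ) ≤ (n : ℝ) := by exact_mod_cast hmn
        show r / (2 * ((n : ℝ) + 2)) ≤ r / (2 * ((m : ℝ) + 2))
        apply div_le_div_of_nonneg_left hr.le (by positivity)
        linarith
      have hy_exists : ∀ n : ℕ, ∃ z : EuclideanSpace ℝ (Fin d), ((t : EReal) < F z ∧ z ≠ x) ∧ dist z x < δ n := by
        intro n
        have h1 : ∀ᶠ z in 𝓝[≠] x, z ≠ x := by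
          filter_upwards [self_mem_nhdsWithin] with z hz
          exact hz
        have h2 : ∀ᶠ z in 𝓝[≠] x, dist z x < δ n :=
          eventually_nhdsWithin_of_eventually_nhds
            (by
              have := Metric.ball_mem_nhds x (hδpos n)
              filter_upwards [this] with z hz
              exact mem_ball.1 hz)
        exact ((hfreq.and_eventually h1).and_eventually h2).exists
      choose y hy1 hydist using hy_exists
      have hyt : ∀ n, (t : EReal) < F (y n) := fun n => (hy1 n).1
      have hyx : ∀ n, y n ≠ x := fun n => (hy1 n).2
      -- basic geometry
      set s : ℕ → ℝ := fun n => dist (y n) x with hsdef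
      have hspos : ∀ n, 0 < s n := fun n => dist_pos.2 (hyx n)
      have hslt : ∀ n, s n < δ n := hydist
      have hsr : ∀ n, s n < r := by
        intro n
        have h1 := hslt n
        have h2 := hδle n
        have h3 := hδpos n
        linarith
      set Bn : ℕ → Set (EuclideanSpace ℝ (Fin d)) := fun n => closedBall (y n) (r - s n) with hBndef
      have hBn_sub : ∀ n, Bn n ⊆ B := by
        intro n z hz
        rw [mem_closedBall] at hz ⊢
        calc dist z x ≤ dist z (y n) + dist (y n) x := dist_triangle _ _ _
          _ ≤ (r - s n) + s n := add_le_add hz le_rfl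
          _ = r := by ring
      have hBn_subD : ∀ n, Bn n ⊆ D := fun n => (hBn_sub n).trans hsubB
      have hyD : ∀ n, y n ∈ D := fun n =>
        hsubB (mem_closedBall.2 (le_of_lt (hsr n)))
      have hinner : ∀ n, closedBall x (r - 2 * δ n) ⊆ Bn n := by
        intro n z hz
        rw [mem_closedBall] at hz ⊢
        calc dist z (y n) ≤ dist z x + dist x (y n) := dist_triangle _ _ _
          _ = dist z x + s n := by rw [dist_comm x (y n)]
          _ ≤ (r - 2 * δ n) + s n := add_le_add hz le_rfl
          _ ≤ r - s n := by
              have h1 : s n < δ n := hslt n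
              nlinarith
      -- `keyA` at the center `y n`
      have hkeyn : ∀ n, F (y n) * ((volume (Bn n)).toReal : EReal)
          ≤ eInt (volume.restrict (Bn n)) F := fun n =>
        keyA (y n) (hyD n) (r - s n) (by linarith [hsr n]) (hBn_subD n)
      -- positive and negative parts over `Bn n`
      set Pn : ℕ → ℝ≥0∞ := fun n => ∫⁻ z, (F z).posPart ∂(volume.restrict (Bn n)) with hPndef
      set Nn : ℕ → ℝ≥0∞ := fun n => ∫⁻ z, (-(F z)).posPart ∂(volume.restrict (Bn n)) with hNndef
      have hPn_le : ∀ n, Pn n ≤ PF := fun n =>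
        lintegral_mono' (Measure.restrict_mono (hBn_sub n) le_rfl) le_rfl
      have hNn_le : ∀ n, Nn n ≤ NF := fun n =>
        lintegral_mono' (Measure.restrict_mono (hBn_sub n) le_rfl) le_rfl
      have hPn : ∀ n, Pn n ≠ ⊤ := fun n => ne_top_of_le_ne_top hPF (hPn_le n)
      have hNn : ∀ n, Nn n ≠ ⊤ := fun n => ne_top_of_le_ne_top hNF (hNn_le n)
      -- annuli
      set Ann : ℕ → Set (EuclideanSpace ℝ (Fin d)) := fun n => B \ closedBall x (r - 2 * δ n) with hAnndef
      have hAnn_meas : ∀ n, MeasurableSet (Ann n) :=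
        fun n => hBmeas.diff measurableSet_closedBall
      set A : ℕ → ℝ≥0∞ := fun n => ∫⁻ z in Ann n, (‖g z‖₊ : ℝ≥0∞) ∂volume with hAdef
      have hA_le : ∀ n, A n ≤ ∫⁻ z, (‖g z‖₊ : ℝ≥0∞) ∂μ := by
        intro n
        refine lintegral_mono' (Measure.restrict_mono (Set.diff_subset) le_rfl) le_rfl
      have hA_fin : ∀ n, A n ≠ ⊤ := fun n => ne_top_of_le_ne_top hgB.2.ne (hA_le n)
      -- `NF ≤ Nn + A n`
      have hNF_le : ∀ n, NF ≤ Nn n + A n := by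
        intro n
        have hsplit : μ ≤ volume.restrict (Bn n) + volume.restrict (B \ Bn n) :=
          calc μ = volume.restrict (Bn n ∪ (B \ Bn n)) := by
                rw [hμdef, Set.union_diff_cancel (hBn_sub n)]
            _ ≤ volume.restrict (Bn n) + volume.restrict (B \ Bn n) :=
                Measure.restrict_union_le _ _
        calc NF ≤ ∫⁻ z, (-(F z)).posPart ∂(volume.restrict (Bn n) + volume.restrict (B \ Bn n)) :=
              lintegral_mono' hsplit le_rfl
          _ = Nn n + ∫⁻ z, (-(F z)).posPart ∂(volume.restrict (B \ Bn n)) :=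
              lintegral_add_measure _ _ _
          _ ≤ Nn n + A n := by
              refine add_le_add le_rfl ?_
              have hsub2 : B \ Bn n ⊆ Ann n :=
                Set.diff_subset_diff_right (hinner n)
              calc ∫⁻ z, (-(F z)).posPart ∂(volume.restrict (B \ Bn n))
                  ≤ ∫⁻ z, (-(F z)).posPart ∂(volume.restrict (Ann n)) :=
                    lintegral_mono' (Measure.restrict_mono hsub2 le_rfl) le_rfl
                _ ≤ A n := by
                    refine lintegral_mono_ae ?_
                    have haeAnn : ∀ᵐ z ∂(volume.restrict (Ann n)),
                        (g z : EReal) ≤ F z ∧ F z ≤ (G z : EReal) :=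
                      ae_restrict_of_ae_restrict_of_subset
                        (Set.Subset.trans Set.diff_subset hsubB) haeF
                    filter_upwards [haeAnn] with z hz
                    calc (-(F z)).posPart ≤ ((-(g z) : ℝ) : EReal).posPart := by
                          refine EReal.posPart_mono' ?_
                          rw [EReal.coe_neg]
                          exact EReal.neg_le_neg_iff.2 hz.1
                      _ = ENNReal.ofReal (-(g z)) := EReal.posPart_coe' _
                      _ ≤ (‖(-(g z))‖₊ : ℝ≥0∞) := Real.ofReal_le_enorm _
                      _ = (‖g z‖₊ : ℝ≥0∞) := by rw [nnnorm_neg]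
      -- the numerical inequality for each n
      have hnum : ∀ n, t * (volume (Bn n)).toReal
          ≤ PF.toReal - NF.toReal + (A n).toReal := by
        intro n
        have h1 : (t : EReal) * ((volume (Bn n)).toReal : EReal)
            ≤ eInt (volume.restrict (Bn n)) F :=
          le_trans (EReal.mul_coe_le_mul_coe (le_of_lt (hyt n)) ENNReal.toReal_nonneg)
            (hkeyn n)
        have h2 : eInt (volume.restrict (Bn n)) F
            = (((Pn n).toReal - (Nn n).toReal : ℝ) : EReal) :=
          eInt_eq_coe' _ F rfl rfl (hPn n) (hNn n)
        rw [h2, ← EReal.coe_mul, EReal.coe_le_coe_iff] at h1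
        have h3 : (Pn n).toReal ≤ PF.toReal := ENNReal.toReal_mono hPF (hPn_le n)
        have h4 : NF.toReal ≤ (Nn n).toReal + (A n).toReal := by
          have := ENNReal.toReal_mono (by
            exact ENNReal.add_ne_top.2 ⟨hNn n, hA_fin n⟩) (hNF_le n)
          rwa [ENNReal.toReal_add (hNn n) (hA_fin n)] at this
        linarith
      -- limits
      have hδ0 : Tendsto δ atTop (𝓝 0) := by
        rw [hδdef]
        have : Tendsto (fun n : ℕ => (2 * ((n : ℝ) + 2))) atTop atTop := by
          apply Tendsto.const_mul_atTop (by norm_num)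
          exact tendsto_atTop_add_const_right _ _ tendsto_natCast_atTop_atTop
        simpa using Tendsto.div_atTop tendsto_const_nhds this
      haveI : Nontrivial (EuclideanSpace ℝ (Fin d)) := ⟨⟨y 0, x, hyx 0⟩⟩
      -- volume of Bn tends to volume of B
      have hWmono : Monotone (fun n => closedBall x (r - 2 * δ n)) := by
        intro m n hmn
        exact closedBall_subset_closedBall (by
          have := hδanti hmn
          linarith)
      have hWunion : (⋃ n, closedBall x (r - 2 * δ n)) = ball x r := by
        ext z
        simp only [Set.mem_iUnion, mem_closedBall, mem_ball]
        constructor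
        · rintro ⟨n, hn⟩
          exact lt_of_le_of_lt hn (by linarith [hδpos n])
        · intro hz
          have : Tendsto (fun n => r - 2 * δ n) atTop (𝓝 (r - 2 * 0)) :=
            tendsto_const_nhds.sub (hδ0.const_mul 2)
          rw [mul_zero, sub_zero] at this
          have hev : ∀ᶠ n in atTop, dist z x < r - 2 * δ n :=
            (tendsto_order.1 this).1 _ hz
          exact hev.exists.imp (fun n hn => hn.le)
      have hWtendsto : Tendsto (fun n => volume (closedBall x (r - 2 * δ n))) atTop
          (𝓝 (volume B)) := by
        have h1 := tendsto_measure_iUnion_atTop (μ := volume) hWmono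
        rw [hWunion] at h1
        have h2 : volume (ball x r) = volume B := by
          rw [hBdef, Measure.addHaar_closedBall_eq_addHaar_ball]
        rw [h2] at h1
        exact h1
      have hVn_tendsto : Tendsto (fun n => (volume (Bn n)).toReal) atTop (𝓝 V) := by
        have hsq : Tendsto (fun n => volume (Bn n)) atTop (𝓝 (volume B)) := by
          refine tendsto_of_tendsto_of_tendsto_of_le_of_le hWtendsto tendsto_const_nhds
            (fun n => measure_mono (hinner n)) (fun n => measure_mono (hBn_sub n))
        exact (ENNReal.tendsto_toReal measure_closedBall_lt_top.ne).comp hsq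
      -- A n tends to 0
      have hAnn_anti : Antitone Ann := by
        intro m n hmn
        exact Set.diff_subset_diff_right (hWmono hmn)
      have hAnn_inter : (⋂ n, Ann n) = sphere x r := by
        rw [hAnndef]
        rw [← Set.diff_iUnion, hWunion, hBdef, closedBall_diff_ball]
      have hA_tendsto : Tendsto A atTop (𝓝 0) := by
        -- use a measurable density
        have hmeas : AEMeasurable (fun z => (‖g z‖₊ : ℝ≥0∞)) μ := hgB.1.enorm
        set f0 := hmeas.mk _ with hf0def
        have hf0meas : Measurable f0 := hmeas.measurable_mk
        have hf0eq : (fun z => (‖g z‖₊ : ℝ≥0∞)) =ᵐ[μ] f0 := hmeas.ae_eq_mk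
        set ν := μ.withDensity f0 with hνdef
        have hAeq : ∀ n, A n = ν (Ann n) := by
          intro n
          rw [hνdef, withDensity_apply _ (hAnn_meas n)]
          rw [hμdef, Measure.restrict_restrict (hAnn_meas n),
            Set.inter_eq_self_of_subset_left Set.diff_subset]
          refine lintegral_congr_ae ?_
          exact ae_restrict_of_ae_restrict_of_subset Set.diff_subset hf0eq
        have hν_fin : ν (Ann 0) ≠ ⊤ := by
          rw [← hAeq 0]; exact hA_fin 0
        have hν_sphere : ν (sphere x r) = 0 := by
          rw [hνdef, withDensity_apply _ (isClosed_sphere.measurableSet)]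
          refine setLIntegral_measure_zero _ _ ?_
          rw [hμdef, Measure.restrict_apply isClosed_sphere.measurableSet]
          exact measure_mono_null Set.inter_subset_left
            (Measure.addHaar_sphere_of_ne_zero volume x hr.ne')
        have h1 : Tendsto (fun n => ν (Ann n)) atTop (𝓝 (ν (⋂ n, Ann n))) :=
          tendsto_measure_iInter_atTop
            (fun n => (hAnn_meas n).nullMeasurableSet) hAnn_anti ⟨0, hν_fin⟩
        rw [hAnn_inter, hν_sphere] at h1
        exact Tendsto.congr (fun n => (hAeq n).symm) h1
      have hA_toReal : Tendsto (fun n => (A n).toReal) atTop (𝓝 0) := by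
        have := (ENNReal.tendsto_toReal (by simp : (0:ℝ≥0∞) ≠ ⊤)).comp hA_tendsto
        simpa [Function.comp_def] using this
      -- conclude the real inequality
      have hleft : Tendsto (fun n => t * (volume (Bn n)).toReal) atTop (𝓝 (t * V)) :=
        hVn_tendsto.const_mul t
      have hright : Tendsto (fun n => PF.toReal - NF.toReal + (A n).toReal) atTop
          (𝓝 (PF.toReal - NF.toReal)) := by
        have := tendsto_const_nhds.add hA_toReal (f := fun _ : ℕ => PF.toReal - NF.toReal)
        simpa using this
      have hfinal : t * V ≤ PF.toReal - NF.toReal :=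
        le_of_tendsto_of_tendsto' hleft hright hnum
      rw [heIntF, ← EReal.coe_mul]
      exact EReal.coe_le_coe_iff.2 hfinal
    -- combine the two parts
    have hcomb : Freg x * (V : EReal) ≤ eInt μ F := by
      have hFx : Freg x = F x ⊔ limsup F (𝓝[≠] x) := rfl
      rw [hFx]
      rcases le_total (F x) (limsup F (𝓝[≠] x)) with hcase | hcase
      · rw [sup_eq_right.2 hcase]; exact hlimsup_part
      · rw [sup_eq_left.2 hcase]; exact hcenter
    exact le_trans hcomb heIntle
  · -- the regularization is not identically ⊥
    have hDvol : 0 < volume D := hDo.measure_pos volume hDc.nonempty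
    set T := {z : EuclideanSpace ℝ (Fin d) | (g z : EReal) ≤ F z ∧ F z ≤ (G z : EReal)} with hT
    have hTc : (volume.restrict D) Tᶜ = 0 := by
      have h0 := ae_iff.1 haeF
      rw [hT, Set.compl_setOf]
      exact h0
    have hTD : (T ∩ D).Nonempty := by
      by_contra hemp
      rw [Set.not_nonempty_iff_eq_empty] at hemp
      have hsub : D ⊆ Tᶜ := fun z hz hzT =>
        Set.eq_empty_iff_forall_notMem.1 hemp z ⟨hzT, hz⟩
      have hle : (volume.restrict D) D ≤ (volume.restrict D) Tᶜ := measure_mono hsub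
      rw [hTc] at hle
      rw [Measure.restrict_apply_self] at hle
      exact absurd (le_antisymm hle zero_le) (ne_of_gt hDvol)
    obtain ⟨z, hzT, hzD⟩ := hTD
    refine ⟨z, hzD, ?_⟩
    have h1 : (g z : EReal) ≤ F z := hzT.1
    intro hbot
    rw [sup_eq_bot_iff] at hbot
    have h2 : F z = ⊥ := hbot.1
    rw [h2] at h1
    exact absurd (le_bot_iff.1 h1) (EReal.coe_ne_bot _)
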